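/- For every n ≥ 2, the even lattice points of the Newton polytope of the generalized Motzkin polynomial are exactly its vertices together with the inner exponent: conv({0} ∪ {2(e+e_j) : j ∈ [n]}) ∩ (2ℤ)ⁿ = {0} ∪ {2(e+e_j) : j ∈ [n]} ∪ {2e}. -/

import Mathlib

open MvPolynomial Finset

noncomputable section

/-- The all-ones exponent vector `e = (1,…,1)`. -/
def eAll (n : ℕ) : Fin n →₀ ℕ := Finsupp.equivFunOnFinite.symm (fun _ => 1)

/-- The exponent vector `2(e + e_j)`. -/
def expMotz (n : ℕ) (j : Fin n) : Fin n →₀ ℕ :=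
  Finsupp.equivFunOnFinite.symm (fun i => if i = j then 4 else 2)

/-- The exponent vector `2e = (2,…,2)`. -/
def twoE (n : ℕ) : Fin n →₀ ℕ := Finsupp.equivFunOnFinite.symm (fun _ => 2)

/-- The generalized Motzkin polynomial
`M_n = 1 + Σ_{j=1}^n x^{2(e+e_j)} − (n+1)·x^{2e}`. -/
def Motzkin (n : ℕ) : MvPolynomial (Fin n) ℝ :=
  1 + (∑ j : Fin n, monomial (expMotz n j) (1 : ℝ)) - monomial (twoE n) ((n : ℝ) + 1)

/-- The signed quadric `N_n = (1 − Σ_{j=1}^n x_j)²`. -/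
def SignedQuadric (n : ℕ) : MvPolynomial (Fin n) ℝ :=
  (1 - ∑ j : Fin n, X j) ^ 2

/-- `f` is a circuit polynomial. -/
def IsCircuit {n : ℕ} (f : MvPolynomial (Fin n) ℝ) : Prop :=
  (∃ (w : Fin n →₀ ℕ) (c : ℝ), 0 ≤ c ∧ f = monomial (2 • w) c) ∨
  (∃ r : ℕ, r ≤ n ∧ ∃ (α : Fin (r + 1) → (Fin n →₀ ℕ)) (c : Fin (r + 1) → ℝ)
      (β : Fin n →₀ ℕ) (fβ : ℝ) (lam : Fin (r + 1) → ℝ),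
    (∀ j, 0 < c j) ∧
    (∀ j i, Even (α j i)) ∧
    AffineIndependent ℝ (fun j => (fun i => (α j i : ℝ))) ∧
    (∀ j, 0 < lam j) ∧ (∑ j, lam j) = 1 ∧
    (∀ i, (β i : ℝ) = ∑ j, lam j * (α j i : ℝ)) ∧
    f = monomial β fβ + ∑ j, monomial (α j) (c j))

/-- `f` is a nonnegative circuit polynomial. -/
def IsNonnegCircuit {n : ℕ} (f : MvPolynomial (Fin n) ℝ) : Prop :=
  IsCircuit f ∧ ∀ x : Fin n → ℝ, 0 ≤ eval x f

/-- The set of sums of nonnegative circuit polynomials. -/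
def SONCset (n : ℕ) : Set (MvPolynomial (Fin n) ℝ) :=
  {f | ∃ (k : ℕ) (μ : Fin k → ℝ) (p : Fin k → MvPolynomial (Fin n) ℝ),
    (∀ i, 0 ≤ μ i) ∧ (∀ i, IsNonnegCircuit (p i)) ∧ f = ∑ i, μ i • p i}

/-- The set of sums of squares. -/
def SOSset (n : ℕ) : Set (MvPolynomial (Fin n) ℝ) :=
  {f | ∃ (k : ℕ) (p : Fin k → MvPolynomial (Fin n) ℝ), f = ∑ i, (p i) ^ 2}

/-- The set of sums of squares of binomials (SDSOS). -/
def SDSOSset (n : ℕ) : Set (MvPolynomial (Fin n) ℝ) :=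
  {f | ∃ (k : ℕ) (a b : Fin k → ℝ) (u v : Fin k → (Fin n →₀ ℕ)),
    f = ∑ i, (monomial (u i) (a i) + monomial (v i) (b i)) ^ 2}

/-- The Sherali-Adams set: nonnegative combinations of `x_I · x̄_J`. -/
def SAset (n : ℕ) : Set (MvPolynomial (Fin n) ℝ) :=
  {f | ∃ α : Finset (Fin n) × Finset (Fin n) → ℝ, (∀ p, 0 ≤ α p) ∧
    f = ∑ p : Finset (Fin n) × Finset (Fin n),
      α p • ((∏ i ∈ p.1, X i) * ∏ j ∈ p.2, (1 - X j))}

/-- The preprime generated by a finite constraint set. -/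
def preprime {n : ℕ} (G : Finset (MvPolynomial (Fin n) ℝ)) :
    Set (MvPolynomial (Fin n) ℝ) :=
  {p | ∃ (k : ℕ) (cc : Fin k → ℝ) (e : Fin k → MvPolynomial (Fin n) ℝ → ℕ),
    (∀ i, 0 ≤ cc i) ∧ p = ∑ i, cc i • ∏ g ∈ G, g ^ (e i g)}

/-- The feasibility set `𝒢₊` of a constraint set. -/
def feasSet {n : ℕ} (G : Finset (MvPolynomial (Fin n) ℝ)) : Set (Fin n → ℝ) :=
  {x | ∀ g ∈ G, 0 ≤ eval x g}

/-- The Boolean hypercube `{0,1}ⁿ ⊆ ℝⁿ`. -/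
def Hypercube (n : ℕ) : Set (Fin n → ℝ) := {x | ∀ i, x i = 0 ∨ x i = 1}

/-- The degree-`D` Putinar-type hierarchy `H(GEN, 𝒢, D)`. -/
def HPut {n : ℕ} (GEN : Set (MvPolynomial (Fin n) ℝ))
    (G : Finset (MvPolynomial (Fin n) ℝ)) (D : ℕ) : Set (MvPolynomial (Fin n) ℝ) :=
  {f | ∃ (k : ℕ) (s g : Fin k → MvPolynomial (Fin n) ℝ),
    (∀ i, s i ∈ GEN) ∧ (∀ i, g i ∈ G) ∧
    (∀ i, (s i * g i).totalDegree ≤ D) ∧ f = ∑ i, s i * g i}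

/-- The degree-`D` Schmüdgen-type hierarchy `H*(GEN, 𝒢, D)`. -/
def HSch {n : ℕ} (GEN : Set (MvPolynomial (Fin n) ℝ))
    (G : Finset (MvPolynomial (Fin n) ℝ)) (D : ℕ) : Set (MvPolynomial (Fin n) ℝ) :=
  {f | ∃ (k : ℕ) (s g : Fin k → MvPolynomial (Fin n) ℝ),
    (∀ i, s i ∈ GEN) ∧ (∀ i, g i ∈ preprime G) ∧
    (∀ i, (s i * g i).totalDegree ≤ D) ∧ f = ∑ i, s i * g i}

/-- `bound(f, GEN, 𝒢, D)` for the Putinar-type hierarchy, valued in `EReal`. -/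
def boundPut {n : ℕ} (f : MvPolynomial (Fin n) ℝ) (GEN : Set (MvPolynomial (Fin n) ℝ))
    (G : Finset (MvPolynomial (Fin n) ℝ)) (D : ℕ) : EReal :=
  sSup {x : EReal | ∃ lam : ℝ, x = (lam : EReal) ∧ f - C lam ∈ HPut GEN G D}

/-- `boundSch(f, GEN, 𝒢, D)` for the Schmüdgen-type hierarchy, valued in `EReal`. -/
def boundSch {n : ℕ} (f : MvPolynomial (Fin n) ℝ) (GEN : Set (MvPolynomial (Fin n) ℝ))
    (G : Finset (MvPolynomial (Fin n) ℝ)) (D : ℕ) : EReal :=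
  sSup {x : EReal | ∃ lam : ℝ, x = (lam : EReal) ∧ f - C lam ∈ HSch GEN G D}

/-- Putinar-type Sherali-Adams hierarchy with the SA degree convention
`deg p_i ≤ ⌊(D − deg g_i)/2⌋`, encoded as `2·deg p_i + deg g_i ≤ D`. -/
def HPutSA {n : ℕ} (G : Finset (MvPolynomial (Fin n) ℝ)) (D : ℕ) :
    Set (MvPolynomial (Fin n) ℝ) :=
  {f | ∃ (k : ℕ) (p g : Fin k → MvPolynomial (Fin n) ℝ),
    (∀ i, p i ∈ SAset n) ∧ (∀ i, g i ∈ G) ∧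
    (∀ i, 2 * (p i).totalDegree + (g i).totalDegree ≤ D) ∧ f = ∑ i, p i * g i}

/-- Schmüdgen-type Sherali-Adams hierarchy with the SA degree convention. -/
def HSchSA {n : ℕ} (G : Finset (MvPolynomial (Fin n) ℝ)) (D : ℕ) :
    Set (MvPolynomial (Fin n) ℝ) :=
  {f | ∃ (k : ℕ) (p g : Fin k → MvPolynomial (Fin n) ℝ),
    (∀ i, p i ∈ SAset n) ∧ (∀ i, g i ∈ preprime G) ∧
    (∀ i, 2 * (p i).totalDegree + (g i).totalDegree ≤ D) ∧ f = ∑ i, p i * g i}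

/-- `bound(f, 𝕊𝔸, 𝒢, D)`. -/
def boundPutSA {n : ℕ} (f : MvPolynomial (Fin n) ℝ)
    (G : Finset (MvPolynomial (Fin n) ℝ)) (D : ℕ) : EReal :=
  sSup {x : EReal | ∃ lam : ℝ, x = (lam : EReal) ∧ f - C lam ∈ HPutSA G D}

/-- `boundSch(f, 𝕊𝔸, 𝒢, D)`. -/
def boundSchSA {n : ℕ} (f : MvPolynomial (Fin n) ℝ)
    (G : Finset (MvPolynomial (Fin n) ℝ)) (D : ℕ) : EReal :=
  sSup {x : EReal | ∃ lam : ℝ, x = (lam : EReal) ∧ f - C lam ∈ HSchSA G D}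

end

section MotzAux
variable {n : ℕ}

private lemma motz_sum_if (j : Fin n) :
    ∑ i : Fin n, (if i = j then (4:ℝ) else 2) = 2 * n + 2 := by
  have h : ∀ i : Fin n, (if i = j then (4:ℝ) else 2) = 2 + (if i = j then 2 else 0) := by
    intro i; split <;> norm_num
  rw [Finset.sum_congr rfl fun i _ => h i, Finset.sum_add_distrib]
  simp [mul_comm]

private lemma motz_sum_if' (i : Fin n) :
    ∑ j : Fin n, (if i = j then (4:ℝ) else 2) = 2 * n + 2 := by
  have h : ∀ j : Fin n, (if i = j then (4:ℝ) else 2) = (if j = i then (4:ℝ) else 2) := by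
    intro j; simp [eq_comm]
  rw [Finset.sum_congr rfl fun j _ => h j, motz_sum_if]

private lemma motz_hull_facts (x : Fin n → ℝ)
    (hx : x ∈ convexHull ℝ ({0} ∪ {p : Fin n → ℝ | ∃ j : Fin n, p = fun i => if i = j then 4 else 2})) :
    (∀ i, 0 ≤ x i) ∧ (∀ i, x i ≤ 4) ∧ (∀ k, ∑ i, x i ≤ ((n:ℝ)+1) * x k) ∧
      ∑ i, x i ≤ 2*((n:ℝ)+1) := by
  set T : Set (Fin n → ℝ) :=
    {x | (∀ i, 0 ≤ x i) ∧ (∀ i, x i ≤ 4) ∧ (∀ k, ∑ i, x i ≤ ((n:ℝ)+1) * x k) ∧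
      ∑ i, x i ≤ 2*((n:ℝ)+1)} with hT
  have hTconv : Convex ℝ T := by
    intro x hx y hy a b ha hb hab
    obtain ⟨h1, h2, h3, h4⟩ := hx
    obtain ⟨g1, g2, g3, g4⟩ := hy
    have hsum : ∑ i, (a • x + b • y) i = a * ∑ i, x i + b * ∑ i, y i := by
      simp [Finset.sum_add_distrib, Finset.mul_sum]
    refine ⟨?_, ?_, ?_, ?_⟩
    · intro i
      have := h1 i; have := g1 i
      simp only [Pi.add_apply, Pi.smul_apply, smul_eq_mul]
      nlinarith
    · intro i
      have := h2 i; have := g2 i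
      simp only [Pi.add_apply, Pi.smul_apply, smul_eq_mul]
      nlinarith
    · intro k
      have := h3 k; have := g3 k
      rw [hsum]
      simp only [Pi.add_apply, Pi.smul_apply, smul_eq_mul]
      nlinarith
    · rw [hsum]; nlinarith
  have hAT : ({0} ∪ {p : Fin n → ℝ | ∃ j : Fin n, p = fun i => if i = j then 4 else 2}) ⊆ T := by
    rintro y (rfl | ⟨j, rfl⟩)
    · refine ⟨fun i => le_refl 0, fun i => by norm_num, fun k => by simp, by simp; positivity⟩
    · refine ⟨?_, ?_, ?_, ?_⟩
      · intro i; dsimp only; split <;> norm_num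
      · intro i; dsimp only; split <;> norm_num
      · intro k
        rw [motz_sum_if]
        dsimp only
        split
        · nlinarith [Nat.cast_nonneg (α := ℝ) n]
        · ring_nf; nlinarith [Nat.cast_nonneg (α := ℝ) n]
      · rw [motz_sum_if]; ring_nf; nlinarith [Nat.cast_nonneg (α := ℝ) n]
  exact convexHull_min hAT hTconv hx

end MotzAux


/-- For every `n ≥ 2`, the even lattice points of the Newton polytope of
the generalized Motzkin polynomial are exactly its vertices together with the inner
exponent `2e`. -/
theorem motzkin_even_lattice_points (n : ℕ) (hn : 2 ≤ n) :
    let A : Set (Fin n → ℝ) :=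
      {0} ∪ {p | ∃ j : Fin n, p = fun i => if i = j then 4 else 2}
    convexHull ℝ A ∩ {x : Fin n → ℝ | ∀ i, ∃ m : ℤ, x i = 2 * (m : ℝ)}
      = A ∪ {fun _ => 2} := by
  intro A
  have hA : A = {0} ∪ {p : Fin n → ℝ | ∃ j : Fin n, p = fun i => if i = j then 4 else 2} := rfl
  rw [hA]
  ext x
  simp only [Set.mem_inter_iff, Set.mem_union, Set.mem_setOf_eq, Set.mem_singleton_iff]
  constructor
  · rintro ⟨hxh, hxm⟩
    choose m hm using hxm
    obtain ⟨h1, h2, h3, h4⟩ := motz_hull_facts x hxh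
    have hm0 : ∀ i, 0 ≤ m i := by
      intro i
      have h := h1 i
      rw [hm i] at h
      have : (0:ℝ) ≤ (m i : ℝ) := by linarith
      exact_mod_cast this
    have hm2 : ∀ i, m i ≤ 2 := by
      intro i
      have h := h2 i
      rw [hm i] at h
      have : (m i : ℝ) ≤ 2 := by linarith
      exact_mod_cast this
    have hSm : ∑ i, x i = 2 * ((∑ i, m i : ℤ) : ℝ) := by
      push_cast
      rw [Finset.mul_sum]
      exact Finset.sum_congr rfl fun i _ => hm i
    have hsum_le : (∑ i, m i) ≤ (n : ℤ) + 1 := by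
      have h := h4
      rw [hSm] at h
      have : ((∑ i, m i : ℤ) : ℝ) ≤ (n:ℝ) + 1 := by linarith
      exact_mod_cast this
    have hsum_lek : ∀ k, (∑ i, m i) ≤ ((n:ℤ) + 1) * m k := by
      intro k
      have h := h3 k
      rw [hSm, hm k] at h
      have : ((∑ i, m i : ℤ) : ℝ) ≤ (((n:ℤ) + 1) * m k : ℤ) := by push_cast at h ⊢; nlinarith
      exact_mod_cast this
    by_cases hz : ∃ k, m k = 0
    · left; left
      obtain ⟨k, hk⟩ := hz
      have hs0 : (∑ i, m i) ≤ 0 := by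
        have := hsum_lek k
        rw [hk] at this
        simpa using this
      have hall : ∀ i ∈ Finset.univ, m i = 0 := by
        rw [← Finset.sum_eq_zero_iff_of_nonneg (fun i _ => hm0 i)]
        have : 0 ≤ ∑ i, m i := Finset.sum_nonneg fun i _ => hm0 i
        omega
      funext i
      rw [hm i, hall i (Finset.mem_univ i)]
      norm_num
    · push_neg at hz
      have hm1 : ∀ i, 1 ≤ m i := fun i => by have := hm0 i; have := hz i; omega
      by_cases h2e : ∃ j, m j = 2
      · obtain ⟨j, hj⟩ := h2e
        left; right
        refine ⟨j, ?_⟩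
        have honly : ∀ i, i ≠ j → m i = 1 := by
          intro i0 hij
          by_contra hne
          have hi0 : m i0 = 2 := by have := hm1 i0; have := hm2 i0; omega
          have hle : ∑ k, (if k = j then (2:ℤ) else if k = i0 then 2 else 1) ≤ ∑ k, m k := by
            refine Finset.sum_le_sum fun k _ => ?_
            by_cases h1' : k = j
            · subst h1'; simp [hj]
            · by_cases h2' : k = i0
              · subst h2'; simp [h1', hi0]
              · simp [h1', h2', hm1 k]
          have hval : ∑ k, (if k = j then (2:ℤ) else if k = i0 then 2 else 1) = (n:ℤ) + 2 := by
            have hcongr : ∀ k : Fin n, (if k = j then (2:ℤ) else if k = i0 then 2 else 1)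
                = 1 + (if k = j then 1 else 0) + (if k = i0 then 1 else 0) := by
              intro k
              by_cases h1' : k = j <;> by_cases h2' : k = i0 <;>
                simp_all
            rw [Finset.sum_congr rfl fun k _ => hcongr k]
            simp [Finset.sum_add_distrib]
            omega
          rw [hval] at hle
          omega
        funext i
        rw [hm i]
        by_cases hij : i = j
        · subst hij; rw [hj]; norm_num
        · rw [honly i hij]; simp [hij]
      · push_neg at h2e
        right
        funext i
        have : m i = 1 := by have := hm1 i; have := hm2 i; have := h2e i; omega
        rw [hm i, this]; norm_num
  · rintro ((rfl | ⟨j, rfl⟩) | rfl)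
    · exact ⟨subset_convexHull ℝ _ (Or.inl rfl), fun i => ⟨0, by norm_num⟩⟩
    · refine ⟨subset_convexHull ℝ _ (Or.inr ⟨j, rfl⟩), fun i => ⟨if i = j then 2 else 1, ?_⟩⟩
      dsimp only; split <;> norm_num
    · constructor
      · have hne : ((n:ℝ) + 1) ≠ 0 := by positivity
        have key : (fun _ => (2:ℝ)) = ∑ o : Option (Fin n),
            ((n:ℝ)+1)⁻¹ • (Option.elim o (0 : Fin n → ℝ) (fun j i => if i = j then 4 else 2)) := by
          funext i
          rw [Finset.sum_apply]
          have : ∀ o : Option (Fin n), (((n:ℝ)+1)⁻¹ • (Option.elim o (0 : Fin n → ℝ)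
              (fun j i => if i = j then 4 else 2))) i
              = ((n:ℝ)+1)⁻¹ * (Option.elim o (0 : Fin n → ℝ) (fun j i => if i = j then 4 else 2)) i := by
            intro o; rfl
          rw [Finset.sum_congr rfl fun o _ => this o, ← Finset.mul_sum]
          rw [Fintype.sum_option]
          simp only [Option.elim]
          rw [Pi.zero_apply]  -- maybe
          rw [motz_sum_if' i]
          field_simp
          ring
        rw [key]
        refine (convex_convexHull ℝ _).sum_mem (fun o _ => by positivity) ?_ ?_
        · rw [Finset.sum_const]
          simp only [Finset.card_univ, Fintype.card_option, Fintype.card_fin, nsmul_eq_mul]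
          push_cast
          field_simp
        · rintro (_ | j) _
          · exact subset_convexHull ℝ _ (Or.inl rfl)
          · exact subset_convexHull ℝ _ (Or.inr ⟨j, rfl⟩)
      · exact fun i => ⟨1, by norm_num⟩
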